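/- arXiv:2205.08434 — 3 statements merged into one kernel-verified Lean document; each statement's English description precedes it below -/
import Mathlib

section
/- Let f: D ⊆ ℝ^d → ℝ be of class C^μ with all μ-th order partial derivatives Lipschitz with constant ϑ on a neighborhood B(a) of a. Then for any unit vector ν and h > 0 with a + hν ∈ B(a), the difference between the truncated Taylor directional series and the finite difference quotient satisfies |∑_{k=1}^{μ} (h^{k-1}/k!) (ν·∇)^k f(a) − (f(a+hν) − f(a))/h| ≤ (h^μ / (μ+1)!) · ϑ · ‖ν‖₁^μ. -/
open scoped BigOperators

open Set

lemma iteratedFDerivWithin_eq_iteratedFDeriv_of_mem_interior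
    {E F : Type*} [NormedAddCommGroup E] [NormedSpace ℝ E]
    [NormedAddCommGroup F] [NormedSpace ℝ F]
    (n : ℕ) (f : E → F) (B : Set E) {x : E} (hx : x ∈ interior B) :
    iteratedFDerivWithin ℝ n f B x = iteratedFDeriv ℝ n f x := by
  have h1 : interior B ∈ nhds x := isOpen_interior.mem_nhds hx
  have e1 := iteratedFDerivWithin_inter (𝕜 := ℝ) (f := f) (n := n) (s := B) h1
  have e2 := iteratedFDerivWithin_inter (𝕜 := ℝ) (f := f) (n := n) (s := Set.univ) h1
  rw [Set.inter_eq_right.mpr interior_subset] at e1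
  rw [Set.univ_inter] at e2
  rw [← e1, e2, iteratedFDerivWithin_univ]

lemma multilin_abs_bound (d n : ℕ)
    (M : ContinuousMultilinearMap ℝ (fun _ : Fin n => EuclideanSpace ℝ (Fin d)) ℝ)
    (ν : EuclideanSpace ℝ (Fin d)) (C : ℝ)
    (hC : ∀ m : Fin n → Fin d, |M (fun j => EuclideanSpace.single (m j) (1:ℝ))| ≤ C) :
    |M (fun _ => ν)| ≤ (∑ i, |ν i|) ^ n * C := by
  have hν : (fun _ : Fin n => ν)
      = fun _ => ∑ i, ν i • EuclideanSpace.single i (1:ℝ) := by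
    funext _
    ext j
    rw [WithLp.ofLp_sum, Finset.sum_apply]
    simp [EuclideanSpace.single_apply]
  rw [hν, M.map_sum]
  calc |∑ r : Fin n → Fin d, M fun j => ν (r j) • EuclideanSpace.single (r j) (1:ℝ)|
      ≤ ∑ r : Fin n → Fin d, |M fun j => ν (r j) • EuclideanSpace.single (r j) (1:ℝ)| :=
        Finset.abs_sum_le_sum_abs _ _
    _ ≤ ∑ r : Fin n → Fin d, (∏ j, |ν (r j)|) * C := by
        apply Finset.sum_le_sum
        intro r _
        rw [M.map_smul_univ (fun j => ν (r j)) (fun j => EuclideanSpace.single (r j) (1:ℝ))]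
        rw [smul_eq_mul, abs_mul, Finset.abs_prod]
        exact mul_le_mul_of_nonneg_left (hC r) (Finset.prod_nonneg fun _ _ => abs_nonneg _)
    _ = (∑ i, |ν i|) ^ n * C := by
        rw [← Finset.sum_mul]
        congr 1
        rw [← Fintype.piFinset_univ,
          ← Finset.prod_univ_sum (fun _ : Fin n => Finset.univ) (fun _ k => |ν k|)]
        simp

/-- Taylor-remainder lemma. The truncated directional Taylor series
minus the finite difference quotient is bounded by `(h^μ/(μ+1)!) ϑ ‖ν‖₁^μ`,
assuming `f` is `C^μ` on a convex neighborhood `B` of `a` and all `μ`-th order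
partial derivatives are `ϑ`-Lipschitz on `B`. -/
theorem taylor_remainder_bound
    (d μ : ℕ) (hμ : 1 ≤ μ)
    (f : EuclideanSpace ℝ (Fin d) → ℝ)
    (B : Set (EuclideanSpace ℝ (Fin d)))
    (a ν : EuclideanSpace ℝ (Fin d)) (h ϑ : ℝ)
    (hB : B ∈ nhds a) (hBconv : Convex ℝ B)
    (hsmooth : ContDiffOn ℝ μ f B)
    (hϑ : 0 ≤ ϑ)
    (hlip : ∀ (m : Fin μ → Fin d), ∀ x ∈ B, ∀ y ∈ B,
      |iteratedFDeriv ℝ μ f x (fun j => EuclideanSpace.single (m j) (1 : ℝ)) -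
       iteratedFDeriv ℝ μ f y (fun j => EuclideanSpace.single (m j) (1 : ℝ))| ≤ ϑ * ‖x - y‖)
    (hν : ‖ν‖ = 1) (hh : 0 < h) (hmem : a + h • ν ∈ B) :
    |(∑ k ∈ Finset.Icc 1 μ,
        (h ^ (k - 1) / (Nat.factorial k : ℝ)) *
          iteratedFDeriv ℝ k f a (fun _ : Fin k => ν)) -
      (f (a + h • ν) - f a) / h|
      ≤ h ^ μ / (Nat.factorial (μ + 1) : ℝ) * ϑ * (∑ i, |ν i|) ^ μ := by
  obtain ⟨n, rfl⟩ : ∃ n, μ = n + 1 := ⟨μ - 1, (Nat.succ_pred_eq_of_pos hμ).symm⟩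
  have haB : a ∈ B := mem_of_mem_nhds hB
  have haInt : a ∈ interior B := mem_interior_iff_mem_nhds.mpr hB
  have hBuniq : UniqueDiffOn ℝ B := uniqueDiffOn_convex hBconv ⟨a, haInt⟩
  set φ : ℝ → EuclideanSpace ℝ (Fin d) := fun t => a + t • ν with hφdef
  set g : ℝ → ℝ := fun t => f (φ t) with hgdef
  have hφ0 : φ 0 = a := by simp [hφdef]
  have hmap : Set.MapsTo φ (Set.Icc 0 h) B := by
    intro t ht
    have h1 : φ t = (1 - t/h) • a + (t/h) • (a + h • ν) := by
      have ht' : (t/h) * h = t := div_mul_cancel₀ t hh.ne'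
      simp only [hφdef, smul_add, smul_smul, ht', ← add_assoc, ← add_smul]
      rw [sub_add_cancel, one_smul]
    rw [h1]
    exact hBconv haB hmem (sub_nonneg.mpr ((div_le_one hh).mpr ht.2))
      (div_nonneg ht.1 hh.le) (by ring)
  have hφC : ContDiff ℝ (↑(n+1) : ℕ∞) φ :=
    contDiff_const.add (contDiff_id.smul contDiff_const)
  have hg : ContDiffOn ℝ (↑(n+1) : ℕ∞) g (Set.Icc 0 h) :=
    hsmooth.comp hφC.contDiffOn hmap
  have hφd : ∀ (s : Set ℝ) (t : ℝ), HasDerivWithinAt φ ν s t := by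
    intro s t
    have := ((hasDerivAt_id t).smul_const ν).const_add a
    rw [one_smul] at this
    exact this.hasDerivWithinAt
  have hIccU : UniqueDiffOn ℝ (Set.Icc (0:ℝ) h) := uniqueDiffOn_Icc hh
  -- Claim A : derivative of the directional derivative along the line
  have claimA : ∀ k : ℕ, k < n + 1 → ∀ t ∈ Set.Icc (0:ℝ) h,
      HasDerivWithinAt (fun s => iteratedFDerivWithin ℝ k f B (φ s) (fun _ => ν))
        (iteratedFDerivWithin ℝ (k+1) f B (φ t) (fun _ => ν)) (Set.Icc 0 h) t := by
    intro k hk t ht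
    have hdiff : DifferentiableWithinAt ℝ (iteratedFDerivWithin ℝ k f B) B (φ t) :=
      (hsmooth.differentiableOn_iteratedFDerivWithin (by exact_mod_cast hk) hBuniq)
        _ (hmap ht)
    have h2 : HasDerivWithinAt (fun s => iteratedFDerivWithin ℝ k f B (φ s))
        (fderivWithin ℝ (iteratedFDerivWithin ℝ k f B) B (φ t) ν) (Set.Icc 0 h) t :=
      hdiff.hasFDerivWithinAt.comp_hasDerivWithinAt t (hφd _ t) hmap
    have h3 := (ContinuousMultilinearMap.apply ℝ
        (fun _ : Fin k => EuclideanSpace ℝ (Fin d)) ℝ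
        (fun _ => ν)).hasFDerivAt.comp_hasDerivWithinAt t h2
    refine h3.congr_deriv ?_
    symm
    rw [iteratedFDerivWithin_succ_apply_left]
    rfl
  -- Claim B : the iterated derivative of g along the segment
  have claimB : ∀ k : ℕ, k ≤ n + 1 → ∀ t ∈ Set.Icc (0:ℝ) h,
      iteratedDerivWithin k g (Set.Icc 0 h) t
        = iteratedFDerivWithin ℝ k f B (φ t) (fun _ => ν) := by
    intro k
    induction k with
    | zero =>
      intro _ t _
      simp [iteratedDerivWithin_zero, iteratedFDerivWithin_zero_apply, hgdef]
    | succ k IH =>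
      intro hk t ht
      have hk' : k ≤ n + 1 := Nat.le_of_succ_le hk
      rw [iteratedDerivWithin_succ]
      have e1 : derivWithin (iteratedDerivWithin k g (Set.Icc 0 h)) (Set.Icc 0 h) t
          = derivWithin (fun s => iteratedFDerivWithin ℝ k f B (φ s) (fun _ => ν))
              (Set.Icc 0 h) t := by
        apply derivWithin_congr
        · intro s hs; exact IH hk' s hs
        · exact IH hk' t ht
      rw [e1, (claimA k (Nat.lt_of_succ_le hk) t ht).derivWithin (hIccU t ht)]
  have hgC : ContDiffOn ℝ (↑n : ℕ∞) g (Set.Icc 0 h) :=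
    hg.of_le (by exact_mod_cast Nat.le_succ n)
  have hgdiffn : DifferentiableOn ℝ (iteratedDerivWithin n g (Set.Icc 0 h)) (Set.Icc 0 h) := by
    intro t ht
    exact ((claimA n (Nat.lt_succ_self n) t ht).differentiableWithinAt).congr
      (fun s hs => claimB n (Nat.le_succ n) s hs) (claimB n (Nat.le_succ n) t ht)
  set Dfun : ℝ → ℝ := fun t => iteratedDerivWithin (n+1) g (Set.Icc 0 h) t with hDfun
  have hT : ∀ t ∈ Set.Icc (0:ℝ) h,
      HasDerivWithinAt (fun y => taylorWithinEval g n (Set.Icc 0 h) y h)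
        ((((Nat.factorial n : ℕ) : ℝ)⁻¹ * (h - t)^n) • Dfun t) (Set.Icc 0 h) t :=
    fun t ht => hasDerivWithinAt_taylorWithinEval_at_Icc h hh ht hgC hgdiffn
  set G : ℝ → ℝ := fun t =>
    taylorWithinEval g n (Set.Icc 0 h) t h + (h - t)^(n+1)/((Nat.factorial (n+1) : ℕ) : ℝ) * Dfun 0 with hGdef
  have hG : ∀ t ∈ Set.Icc (0:ℝ) h,
      HasDerivWithinAt G (((Nat.factorial n : ℕ) : ℝ)⁻¹ * (h - t)^n * (Dfun t - Dfun 0)) (Set.Icc 0 h) t := by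
    intro t ht
    have h2 : HasDerivAt (fun t => (h - t)^(n+1)/((Nat.factorial (n+1) : ℕ) : ℝ) * Dfun 0)
        (((↑(n+1) : ℝ) * (h - t)^(n+1-1) * (-1))/((Nat.factorial (n+1) : ℕ) : ℝ) * Dfun 0) t :=
      ((((hasDerivAt_id t).const_sub h).pow (n+1)).div_const _).mul_const _
    have h3 := (hT t ht).add h2.hasDerivWithinAt
    refine h3.congr_deriv ?_
    symm
    have hfact : ((Nat.factorial (n+1) : ℕ) : ℝ) = (n+1) * ((Nat.factorial n : ℕ) : ℝ) := by
      push_cast [Nat.factorial_succ]; ring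
    have hnfact : ((Nat.factorial n : ℕ) : ℝ) ≠ 0 := by positivity
    simp only [Nat.add_sub_cancel, smul_eq_mul, hfact]
    push_cast
    field_simp
    ring
  set S : ℝ := ∑ i, |ν i| with hSdef
  set L : ℝ := ϑ * S ^ (n+1) with hLdef
  -- interior membership along the half-open segment
  have hInt : ∀ t ∈ Set.Ico (0:ℝ) h, φ t ∈ interior B := by
    intro t ht
    rcases eq_or_lt_of_le ht.1 with h0 | h0
    · rw [← h0, hφ0]; exact haInt
    · have hseg : φ t ∈ openSegment ℝ a (a + h • ν) := by
        refine ⟨1 - t/h, t/h, by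
          rw [sub_pos]; exact (div_lt_one hh).mpr ht.2, div_pos h0 hh, by ring, ?_⟩
        have ht' : (t/h) * h = t := div_mul_cancel₀ t hh.ne'
        simp only [hφdef, smul_add, smul_smul, ht', ← add_assoc, ← add_smul]
        rw [sub_add_cancel, one_smul]
      exact hBconv.openSegment_interior_self_subset_interior haInt hmem hseg
  -- Lipschitz bound on the top derivative along the segment
  have hbound : ∀ t ∈ Set.Ico (0:ℝ) h, |Dfun t - Dfun 0| ≤ L * t := by
    intro t ht
    have htIcc : t ∈ Set.Icc (0:ℝ) h := Set.Ico_subset_Icc_self ht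
    have h0Icc : (0:ℝ) ∈ Set.Icc (0:ℝ) h := Set.left_mem_Icc.mpr hh.le
    have e1 : Dfun t = iteratedFDeriv ℝ (n+1) f (φ t) (fun _ => ν) := by
      show iteratedDerivWithin (n+1) g (Set.Icc 0 h) t = _
      rw [claimB (n+1) le_rfl t htIcc,
        iteratedFDerivWithin_eq_iteratedFDeriv_of_mem_interior _ _ _ (hInt t ht)]
    have e0 : Dfun 0 = iteratedFDeriv ℝ (n+1) f a (fun _ => ν) := by
      show iteratedDerivWithin (n+1) g (Set.Icc 0 h) 0 = _
      rw [claimB (n+1) le_rfl 0 h0Icc, hφ0,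
        iteratedFDerivWithin_eq_iteratedFDeriv_of_mem_interior _ _ _ haInt]
    rw [e1, e0]
    have hM := multilin_abs_bound d (n+1)
      (iteratedFDeriv ℝ (n+1) f (φ t) - iteratedFDeriv ℝ (n+1) f a) ν
      (ϑ * ‖φ t - a‖)
      (fun m => by
        simpa using hlip m (φ t) (interior_subset (hInt t ht)) a haB)
    simp only [ContinuousMultilinearMap.sub_apply] at hM
    have hnorm : ‖φ t - a‖ = t := by
      have : φ t - a = t • ν := by simp [hφdef]
      rw [this, norm_smul, hν, Real.norm_eq_abs, abs_of_nonneg ht.1, mul_one]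
    rw [hnorm] at hM
    calc |iteratedFDeriv ℝ (n+1) f (φ t) (fun _ => ν)
          - iteratedFDeriv ℝ (n+1) f a (fun _ => ν)| ≤ S ^ (n+1) * (ϑ * t) := hM
      _ = L * t := by rw [hLdef]; ring
  have hS0 : (0:ℝ) ≤ S := Finset.sum_nonneg fun _ _ => abs_nonneg _
  have hL0 : (0:ℝ) ≤ L := by positivity
  -- the comparison function ψ
  set ψ : ℝ → ℝ := fun t => L/((Nat.factorial n : ℕ) : ℝ) *
      ((h - t)^(n+2)/((n:ℝ)+2) - h * (h - t)^(n+1)/((n:ℝ)+1)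
        + (h^(n+2)/((n:ℝ)+1) - h^(n+2)/((n:ℝ)+2))) with hψdef
  have hψ' : ∀ x : ℝ, HasDerivAt ψ (L/((Nat.factorial n : ℕ) : ℝ) * ((h - x)^n * x)) x := by
    intro x
    have d1 : HasDerivAt (fun t : ℝ => (h - t)^(n+2))
        ((↑(n+2) : ℝ) * (h - x)^(n+2-1) * (-1)) x :=
      ((hasDerivAt_id x).const_sub h).pow (n+2)
    have d2 : HasDerivAt (fun t : ℝ => (h - t)^(n+1))
        ((↑(n+1) : ℝ) * (h - x)^(n+1-1) * (-1)) x :=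
      ((hasDerivAt_id x).const_sub h).pow (n+1)
    have d3 := ((d1.div_const ((n:ℝ)+2)).sub ((d2.const_mul h).div_const ((n:ℝ)+1))).add_const
        (h^(n+2)/((n:ℝ)+1) - h^(n+2)/((n:ℝ)+2))
    have d4 := d3.const_mul (L/((Nat.factorial n : ℕ) : ℝ))
    refine d4.congr_deriv ?_
    symm
    have hn1 : ((n:ℝ)+1) ≠ 0 := by positivity
    have hn2 : ((n:ℝ)+2) ≠ 0 := by positivity
    simp only [Nat.add_sub_cancel]
    push_cast
    field_simp
    ring
  -- Mean value comparison
  have hMVT : ∀ x ∈ Set.Icc (0:ℝ) h, ‖G x - G 0‖ ≤ ψ x := by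
    refine image_norm_le_of_norm_deriv_right_le_deriv_boundary
      (f' := fun t => ((Nat.factorial n : ℕ) : ℝ)⁻¹ * (h - t)^n * (Dfun t - Dfun 0))
      (B' := fun x => L/((Nat.factorial n : ℕ) : ℝ) * ((h - x)^n * x))
      ?hf ?hf' ?ha ?hB ?bound
    case hf =>
      intro t ht
      exact ((hG t ht).continuousWithinAt.sub continuousWithinAt_const)
    case hf' =>
      intro x hx
      exact ((hG x (Set.Ico_subset_Icc_self hx)).sub_const (G 0)).mono_of_mem_nhdsWithin
        (Icc_mem_nhdsGE_of_mem hx)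
    case ha =>
      have hψ0 : ψ 0 = 0 := by
        simp only [hψdef]; ring_nf
      simp [hψ0]
    case hB => exact hψ'
    case bound =>
      intro x hx
      have hx1 : (0:ℝ) ≤ h - x := sub_nonneg.mpr hx.2.le
      have := hbound x hx
      rw [Real.norm_eq_abs, abs_mul, abs_mul]
      rw [abs_of_nonneg (by positivity : (0:ℝ) ≤ ((Nat.factorial n : ℕ) : ℝ)⁻¹),
        abs_of_nonneg (pow_nonneg hx1 n)]
      calc ((Nat.factorial n : ℕ) : ℝ)⁻¹ * (h - x)^n * |Dfun x - Dfun 0|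
          ≤ ((Nat.factorial n : ℕ) : ℝ)⁻¹ * (h - x)^n * (L * x) := by
            apply mul_le_mul_of_nonneg_left this
            positivity
        _ = L/((Nat.factorial n : ℕ) : ℝ) * ((h - x)^n * x) := by ring
  have hfinal := hMVT h (Set.right_mem_Icc.mpr hh.le)
  have hψh : ψ h = L * h^(n+2) / ((Nat.factorial (n+2) : ℕ) : ℝ) := by
    have hfact : ((Nat.factorial (n+2) : ℕ) : ℝ) = ((n:ℝ)+2) * (((n:ℝ)+1) * ((Nat.factorial n : ℕ) : ℝ)) := by
      have : Nat.factorial (n+2) = (n+2) * ((n+1) * Nat.factorial n) := by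
        rw [Nat.factorial_succ, Nat.factorial_succ]
      rw [this]; push_cast; ring
    have hn1 : ((n:ℝ)+1) ≠ 0 := by positivity
    have hn2 : ((n:ℝ)+2) ≠ 0 := by positivity
    have hnf : ((Nat.factorial n : ℕ) : ℝ) ≠ 0 := by positivity
    rw [hψdef, hfact]
    field_simp
    ring
  -- identify G h and G 0
  have hgh : g h = f (a + h • ν) := by simp [hgdef, hφdef]
  have hg0 : g 0 = f a := by simp only [hgdef]; rw [hφ0]
  set A : ℕ → ℝ := fun k => iteratedFDeriv ℝ k f a (fun _ : Fin k => ν) with hAdef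
  have hA : ∀ k, k ≤ n + 1 → iteratedDerivWithin k g (Set.Icc 0 h) 0 = A k := by
    intro k hk
    rw [claimB k hk 0 (Set.left_mem_Icc.mpr hh.le), hφ0,
      iteratedFDerivWithin_eq_iteratedFDeriv_of_mem_interior _ _ _ haInt]
  have hGh : G h = g h := by
    simp only [hGdef]
    simp [taylorWithinEval_self, zero_pow (Nat.succ_ne_zero n)]
  have hG0 : G 0 = ∑ k ∈ Finset.range (n+2), h^k/((Nat.factorial k : ℕ) : ℝ) * A k := by
    simp only [hGdef]
    rw [taylor_within_apply,
      Finset.sum_range_succ (f := fun k => h^k/((Nat.factorial k : ℕ) : ℝ) * A k) (n := n+1)]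
    congr 1
    · apply Finset.sum_congr rfl
      intro k hk
      rw [hA k (by simp at hk; omega : k ≤ n + 1)]
      simp only [smul_eq_mul, sub_zero]
      ring
    · rw [show Dfun 0 = A (n+1) from hA (n+1) le_rfl]
      simp only [sub_zero]
  -- algebraic assembly
  have hsplit : ∑ k ∈ Finset.range (n+2), h^k/((Nat.factorial k : ℕ) : ℝ) * A k
      = A 0 + ∑ k ∈ Finset.Icc 1 (n+1), h^k/((Nat.factorial k : ℕ) : ℝ) * A k := by
    have hins : Finset.range (n+2) = insert 0 (Finset.Icc 1 (n+1)) := by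
      ext x; simp [Finset.mem_range, Finset.mem_Icc]; omega
    rw [hins, Finset.sum_insert (by simp)]
    simp
  have hA0 : A 0 = f a := by
    rw [hAdef]; exact iteratedFDeriv_zero_apply _
  have hmulsum : ∑ k ∈ Finset.Icc 1 (n+1), h^k/((Nat.factorial k : ℕ) : ℝ) * A k
      = h * ∑ k ∈ Finset.Icc 1 (n+1), h^(k-1)/((Nat.factorial k : ℕ) : ℝ) * A k := by
    rw [Finset.mul_sum]
    apply Finset.sum_congr rfl
    intro k hk
    have hk1 : 1 ≤ k := (Finset.mem_Icc.mp hk).1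
    have hpow : h^k = h * h^(k-1) := by
      conv_lhs => rw [← Nat.succ_pred_eq_of_pos hk1]
      rw [pow_succ', Nat.pred_eq_sub_one]
    rw [hpow]; ring
  set X : ℝ := (∑ k ∈ Finset.Icc 1 (n+1),
      (h ^ (k - 1) / ((Nat.factorial k : ℕ) : ℝ)) * A k) - (f (a + h • ν) - f a)/h with hXdef
  have hkey : G 0 - G h = h * X := by
    rw [hG0, hGh, hgh, hsplit, hmulsum, hA0, hXdef]
    field_simp
    ring
  have habs : h * |X| ≤ L * h^(n+2) / ((Nat.factorial (n+2) : ℕ) : ℝ) := by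
    have : ‖G h - G 0‖ = h * |X| := by
      rw [Real.norm_eq_abs, abs_sub_comm, hkey, abs_mul, abs_of_pos hh]
    rw [← this, ← hψh]
    exact hfinal
  have hgoal : |X| ≤ h ^ (n+1) / ((Nat.factorial (n+2) : ℕ) : ℝ) * ϑ * S ^ (n+1) := by
    have hf2 : (0:ℝ) < ((Nat.factorial (n+2) : ℕ) : ℝ) := by positivity
    have : h * (h ^ (n+1) / ((Nat.factorial (n+2) : ℕ) : ℝ) * ϑ * S ^ (n+1)) = L * h^(n+2) / ((Nat.factorial (n+2) : ℕ) : ℝ) := by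
      rw [hLdef]; field_simp; ring
    refine le_of_mul_le_mul_left ?_ hh
    rw [this]
    exact habs
  convert hgoal using 2
end

section
/- Gradient estimation error bound (first order, μ = 1): Let f : D ⊆ ℝ^d → ℝ be C¹ with ∇f Lipschitz with constant ϑ on a convex neighborhood B(a) of a, containing points v₁,…,v_m. Set h_k = ‖v_k − a‖, ν_k = (v_k − a)/h_k, let A ∈ ℝ^{m×d} have rows ν_k^T with full column rank d and smallest singular value σ₁ > 0, and q ∈ ℝ^m have entries (f(v_k) − f(a))/h_k. Let γ̂ = argmin_γ ‖Aγ − q‖. Then ‖∇f(a) − γ̂‖ ≤ (ϑ · h_max / (2σ₁)) · sqrt(∑_{k=1}^m ‖ν_k‖₁²), where h_max = max_k h_k. -/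
open scoped BigOperators RealInnerProductSpace

lemma dnnr_taylor_key {E : Type*} [NormedAddCommGroup E] [InnerProductSpace ℝ E]
    [CompleteSpace E]
    (f : E → ℝ) (B : Set E) (a v : E) (ϑ : ℝ)
    (hB : B ∈ nhds a) (hBconv : Convex ℝ B) (hsmooth : ContDiffOn ℝ 1 f B)
    (hϑ : 0 ≤ ϑ)
    (hlip : ∀ x ∈ B, ∀ y ∈ B, ‖gradient f x - gradient f y‖ ≤ ϑ * ‖x - y‖)
    (hv : v ∈ B) :
    |f v - f a - ⟪v - a, gradient f a⟫| ≤ ϑ / 2 * ‖v - a‖ ^ 2 := by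
  set u := v - a with hu
  have haB : a ∈ B := mem_of_mem_nhds hB
  have haint : a ∈ interior B := mem_interior_iff_mem_nhds.2 hB
  have hseg : ∀ t ∈ Set.Icc (0:ℝ) 1, a + t • u ∈ B := by
    intro t ht
    have : a + t • u ∈ segment ℝ a v := by
      rw [segment_eq_image']
      exact ⟨t, ht, rfl⟩
    exact hBconv.segment_subset haB hv this
  have hint : ∀ t ∈ Set.Ico (0:ℝ) 1, a + t • u ∈ interior B := by
    intro t ht
    rcases eq_or_lt_of_le ht.1 with h0 | h0
    · simpa [← h0] using haint
    · have h1 : (1 : ℝ) - t ∈ Set.Ioc (0:ℝ) 1 := ⟨by linarith [ht.2], by linarith⟩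
      have := hBconv.add_smul_sub_mem_interior hv haint h1
      have heq : v + (1 - t) • (a - v) = a + t • u := by rw [hu]; module
      rwa [heq] at this
  set g : ℝ → ℝ := fun t => f (a + t • u) with hg
  have hg' : ∀ t ∈ Set.Ico (0:ℝ) 1,
      HasDerivAt g ⟪u, gradient f (a + t • u)⟫ t := by
    intro t ht
    have hxint := hint t ht
    have hmem : B ∈ nhds (a + t • u) := mem_interior_iff_mem_nhds.1 hxint
    have hdf : DifferentiableAt ℝ f (a + t • u) :=
      ((hsmooth.differentiableOn one_ne_zero) _ (hseg t ⟨ht.1, ht.2.le⟩)).differentiableAt hmem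
    have hline : HasDerivAt (fun t : ℝ => a + t • u) u t := by
      simpa using ((hasDerivAt_id t).smul_const u).const_add a
    have hcomp := hdf.hasFDerivAt.comp_hasDerivAt t hline
    refine hcomp.congr_deriv ?_
    symm
    rw [real_inner_comm]
    show ⟪gradient f (a + t • u), u⟫ = _
    rw [gradient, ← InnerProductSpace.toDual_apply_apply, LinearIsometryEquiv.apply_symm_apply]
  have hlipt : ∀ t ∈ Set.Ico (0:ℝ) 1,
      |⟪u, gradient f (a + t • u)⟫ - ⟪u, gradient f a⟫| ≤ ϑ * ‖u‖ ^ 2 * t := by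
    intro t ht
    rw [← inner_sub_right]
    calc |⟪u, gradient f (a + t • u) - gradient f a⟫|
        ≤ ‖u‖ * ‖gradient f (a + t • u) - gradient f a‖ := abs_real_inner_le_norm _ _
      _ ≤ ‖u‖ * (ϑ * ‖(a + t • u) - a‖) := by
          gcongr
          exact hlip _ (hseg t ⟨ht.1, ht.2.le⟩) _ haB
      _ = ϑ * ‖u‖ ^ 2 * t := by
          rw [add_sub_cancel_left, norm_smul, Real.norm_eq_abs, abs_of_nonneg ht.1]
          ring
  set c : ℝ := ⟪u, gradient f a⟫ with hc
  set K : ℝ := ϑ * ‖u‖ ^ 2 with hK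
  have hK0 : 0 ≤ K := mul_nonneg hϑ (by positivity)
  have hgc : ContinuousOn g (Set.Icc 0 1) := by
    apply (hsmooth.continuousOn).comp
    · exact (continuous_const.add (continuous_id.smul continuous_const)).continuousOn
    · intro t ht; exact hseg t ht
  have main : ∀ s : ℝ, s = 1 ∨ s = -1 → s * (g 1 - g 0 - c) ≤ K / 2 := by
    intro s hs
    have habs : ∀ x : ℝ, s * x ≤ |x| := by
      intro x
      rcases hs with hs | hs <;> rw [hs]
      · simpa using le_abs_self x
      · rw [neg_one_mul]; exact neg_le_abs x
    set χ : ℝ → ℝ := fun t => s * (g t - g 0 - t * c) - K * t ^ 2 / 2 with hχ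
    have hχd : ∀ t ∈ Set.Ico (0:ℝ) 1,
        HasDerivAt χ (s * (⟪u, gradient f (a + t • u)⟫ - c) - K * t) t := by
      intro t ht
      have h1 : HasDerivAt (fun t => s * (g t - g 0 - t * c))
          (s * (⟪u, gradient f (a + t • u)⟫ - c)) t := by
        have := (((hg' t ht).sub_const (g 0)).sub ((hasDerivAt_id t).mul_const c)).const_mul s
        simpa using this
      have h2 : HasDerivAt (fun t : ℝ => K * t ^ 2 / 2) (K * t) t := by
        have := ((hasDerivAt_pow 2 t).const_mul K).div_const 2
        refine this.congr_deriv ?_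
        ring
      exact h1.sub h2
    have hanti : AntitoneOn χ (Set.Icc 0 1) := by
      apply antitoneOn_of_deriv_nonpos (convex_Icc 0 1)
      · apply ContinuousOn.sub
        · exact continuousOn_const.mul
            ((hgc.sub continuousOn_const).sub (continuousOn_id.mul continuousOn_const))
        · exact (Continuous.continuousOn (by continuity))
      · intro t ht
        rw [interior_Icc] at ht
        exact (hχd t ⟨ht.1.le, ht.2⟩).differentiableAt.differentiableWithinAt
      · intro t ht
        rw [interior_Icc] at ht
        rw [(hχd t ⟨ht.1.le, ht.2⟩).deriv]
        have := hlipt t ⟨ht.1.le, ht.2⟩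
        have hb := habs (⟪u, gradient f (a + t • u)⟫ - c)
        have := le_trans hb this
        linarith
    have h01 := hanti (Set.left_mem_Icc.2 zero_le_one) (Set.right_mem_Icc.2 zero_le_one)
      zero_le_one
    have hχ0 : χ 0 = 0 := by simp [hχ]
    have hχ1 : χ 1 = s * (g 1 - g 0 - c) - K / 2 := by simp [hχ]
    rw [hχ0, hχ1] at h01
    linarith
  have hg1 : g 1 = f v := by simp [hg, hu]
  have hg0 : g 0 = f a := by simp [hg]
  have h1 := main 1 (Or.inl rfl)
  have h2 := main (-1) (Or.inr rfl)
  rw [hg1, hg0] at h1 h2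
  rw [abs_le]
  constructor <;> [nlinarith; nlinarith]

/-- Gradient estimation error bound (first order).  If `f` is `C¹`
with `ϑ`-Lipschitz gradient on a convex neighborhood `B` of `a` containing the
points `v k`, `h k = ‖v k - a‖`, `ν k = (v k - a)/h k`, the matrix with rows
`ν k` has full column rank with smallest singular value `σ₁ > 0`, `q k` is the
difference quotient and `γh` is the least-squares solution, then
`‖∇f(a) - γh‖ ≤ (ϑ h_max / (2 σ₁)) sqrt (∑ k ‖ν k‖₁²)`. -/
theorem dnnr_gradient_estimation_bound
    (d m : ℕ) (f : EuclideanSpace ℝ (Fin d) → ℝ)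
    (B : Set (EuclideanSpace ℝ (Fin d)))
    (a : EuclideanSpace ℝ (Fin d)) (v : Fin m → EuclideanSpace ℝ (Fin d))
    (ϑ σ₁ hmax : ℝ)
    (hB : B ∈ nhds a) (hBconv : Convex ℝ B)
    (hsmooth : ContDiffOn ℝ 1 f B)
    (hϑ : 0 ≤ ϑ)
    (hlip : ∀ x ∈ B, ∀ y ∈ B, ‖gradient f x - gradient f y‖ ≤ ϑ * ‖x - y‖)
    (hvB : ∀ k, v k ∈ B) (hva : ∀ k, v k ≠ a)
    (h : Fin m → ℝ) (ν : Fin m → EuclideanSpace ℝ (Fin d))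
    (hhdef : ∀ k, h k = ‖v k - a‖)
    (hνdef : ∀ k, ν k = (h k)⁻¹ • (v k - a))
    (hmaxdef : hmax = ⨆ k, h k)
    (q : EuclideanSpace ℝ (Fin m))
    (hqdef : ∀ k, q k = (f (v k) - f a) / h k)
    (L : EuclideanSpace ℝ (Fin d) →ₗ[ℝ] EuclideanSpace ℝ (Fin m))
    (hLdef : ∀ γ k, L γ k = ⟪ν k, γ⟫)
    (hσpos : 0 < σ₁)
    (hσ : ∀ γ : EuclideanSpace ℝ (Fin d), σ₁ * ‖γ‖ ≤ ‖L γ‖)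
    (γh : EuclideanSpace ℝ (Fin d))
    (hmin : ∀ γ : EuclideanSpace ℝ (Fin d), ‖L γh - q‖ ≤ ‖L γ - q‖) :
    ‖gradient f a - γh‖
      ≤ ϑ * hmax / (2 * σ₁) * Real.sqrt (∑ k, (∑ i, |ν k i|) ^ 2) := by
  rcases Nat.eq_zero_or_pos m with hm | hm
  · subst hm
    have hL0 : L (gradient f a - γh) = 0 := Subsingleton.elim _ _
    have h1 := hσ (gradient f a - γh)
    rw [hL0, norm_zero] at h1
    have h0 : ‖gradient f a - γh‖ = 0 :=
      le_antisymm (nonpos_of_mul_nonpos_right h1 hσpos) (norm_nonneg _)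
    rw [h0]
    simp
  · have hne : Nonempty (Fin m) := ⟨⟨0, hm⟩⟩
    obtain ⟨k₀⟩ := hne
    have hhpos : ∀ k, 0 < h k := by
      intro k
      rw [hhdef k]
      exact norm_pos_iff.2 (sub_ne_zero.2 (hva k))
    have hhm : ∀ k, h k ≤ hmax := by
      intro k; rw [hmaxdef]
      exact le_ciSup (Set.Finite.bddAbove (Set.finite_range h)) k
    have hmax0 : 0 ≤ hmax := le_trans (hhpos k₀).le (hhm k₀)
    have hν1 : ∀ k, (1 : ℝ) ≤ ∑ i, |ν k i| := by
      intro k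
      have hnν : ‖ν k‖ = 1 := by
        rw [hνdef, norm_smul, Real.norm_eq_abs, abs_of_pos (inv_pos.2 (hhpos k)),
          ← hhdef k, inv_mul_cancel₀ (hhpos k).ne']
      have hle : ‖ν k‖ ≤ ∑ i, |ν k i| := by
        rw [EuclideanSpace.norm_eq,
          show ∑ i, |ν k i| = Real.sqrt ((∑ i, |ν k i|) ^ 2) from
            (Real.sqrt_sq (Finset.sum_nonneg fun i _ => abs_nonneg _)).symm]
        apply Real.sqrt_le_sqrt
        calc ∑ i, ‖ν k i‖ ^ 2 = ∑ i, |ν k i| ^ 2 := by simp [Real.norm_eq_abs]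
          _ ≤ (∑ i, |ν k i|) ^ 2 :=
            Finset.sum_sq_le_sq_sum_of_nonneg fun i _ => abs_nonneg _
      linarith [hnν ▸ hle]
    set G := gradient f a with hG
    set S := ∑ k, (∑ i, |ν k i|) ^ 2 with hS
    set C := ϑ * hmax / 2 with hC
    have hC0 : 0 ≤ C := by rw [hC]; positivity
    have hentry : ∀ k, |(L G) k - q k| ≤ C * ∑ i, |ν k i| := by
      intro k
      have hkey := dnnr_taylor_key f B a (v k) ϑ hB hBconv hsmooth hϑ hlip (hvB k)
      rw [← hhdef k, ← hG] at hkey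
      have hLk : (L G) k = (h k)⁻¹ * ⟪v k - a, G⟫ := by
        rw [hLdef, hνdef, real_inner_smul_left]
      have hqk : q k = (h k)⁻¹ * (f (v k) - f a) := by
        rw [hqdef, div_eq_inv_mul]
      have habs : |(L G) k - q k| = (h k)⁻¹ * |⟪v k - a, G⟫ - (f (v k) - f a)| := by
        rw [hLk, hqk, ← mul_sub, abs_mul, abs_of_pos (inv_pos.2 (hhpos k))]
      rw [habs]
      have hstep : (h k)⁻¹ * |⟪v k - a, G⟫ - (f (v k) - f a)|
          ≤ (h k)⁻¹ * (ϑ / 2 * h k ^ 2) := by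
        apply mul_le_mul_of_nonneg_left _ (inv_pos.2 (hhpos k)).le
        rw [abs_sub_comm]
        exact hkey
      have heval : (h k)⁻¹ * (ϑ / 2 * h k ^ 2) = ϑ * h k / 2 := by
        rw [show (h k)⁻¹ * (ϑ / 2 * h k ^ 2) = ϑ * h k / 2 * (h k * (h k)⁻¹) by ring,
          mul_inv_cancel₀ (hhpos k).ne', mul_one]
      rw [heval] at hstep
      have h4 : ϑ * h k / 2 ≤ C := by rw [hC]; gcongr; exact hhm k
      have h5 : C ≤ C * ∑ i, |ν k i| := le_mul_of_one_le_right hC0 (hν1 k)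
      linarith
    have hnormb : ‖L G - q‖ ≤ C * Real.sqrt S := by
      rw [EuclideanSpace.norm_eq]
      have hsum : ∑ k, ‖(L G - q) k‖ ^ 2 ≤ C ^ 2 * S := by
        rw [hS, Finset.mul_sum]
        apply Finset.sum_le_sum
        intro k _
        have h1 := hentry k
        have h2 : ‖(L G - q) k‖ ^ 2 = |(L G) k - q k| ^ 2 := by
          simp [Real.norm_eq_abs]
        rw [h2]
        calc |(L G) k - q k| ^ 2 ≤ (C * ∑ i, |ν k i|) ^ 2 := by
              apply pow_le_pow_left₀ (abs_nonneg _) h1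
          _ = C ^ 2 * (∑ i, |ν k i|) ^ 2 := by ring
      calc Real.sqrt (∑ k, ‖(L G - q) k‖ ^ 2) ≤ Real.sqrt (C ^ 2 * S) :=
            Real.sqrt_le_sqrt hsum
        _ = C * Real.sqrt S := by
            rw [Real.sqrt_mul (sq_nonneg _), Real.sqrt_sq hC0]
    have horth : ∀ w : EuclideanSpace ℝ (Fin d), ⟪L γh - q, L w⟫ = 0 := by
      intro w
      rcases eq_or_ne (L w) 0 with hw | hw
      · rw [hw, inner_zero_right]
      · set r := L γh - q with hr
        set c : ℝ := ⟪r, L w⟫ with hc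
        have hw2 : 0 < ‖L w‖ ^ 2 := pow_pos (norm_pos_iff.2 hw) 2
        have key : ∀ t : ℝ, 0 ≤ 2 * (t * c) + t ^ 2 * ‖L w‖ ^ 2 := by
          intro t
          have h1 := hmin (γh + t • w)
          have h2 : L (γh + t • w) - q = r + t • L w := by
            rw [map_add, map_smul, hr]; abel
          rw [h2] at h1
          have h3 : ‖r‖ ^ 2 ≤ ‖r + t • L w‖ ^ 2 :=
            pow_le_pow_left₀ (norm_nonneg _) h1 2
          rw [norm_add_sq_real, real_inner_smul_right, norm_smul, Real.norm_eq_abs,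
            mul_pow, sq_abs, ← hc] at h3
          linarith
        have ht := key (-c / ‖L w‖ ^ 2)
        have hid : 2 * (-c / ‖L w‖ ^ 2 * c) + (-c / ‖L w‖ ^ 2) ^ 2 * ‖L w‖ ^ 2
            = -(c ^ 2 / ‖L w‖ ^ 2) := by
          field_simp
          ring
        rw [hid] at ht
        by_contra hc0
        have hcne : c ≠ 0 := hc0
        have h6 : 0 < c ^ 2 := by nlinarith [abs_pos.2 hcne, sq_abs c]
        have hpos : 0 < c ^ 2 / ‖L w‖ ^ 2 := div_pos h6 hw2
        linarith
    have hLle : ‖L (G - γh)‖ ≤ ‖L G - q‖ := by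
      have hdecomp : L G - q = L (G - γh) + (L γh - q) := by
        rw [map_sub]; abel
      have hpyth : ‖L G - q‖ ^ 2 = ‖L (G - γh)‖ ^ 2 + ‖L γh - q‖ ^ 2 := by
        rw [hdecomp, norm_add_sq_real]
        have hz : ⟪L (G - γh), L γh - q⟫ = 0 := by
          rw [real_inner_comm]; exact horth _
        rw [hz]; ring
      nlinarith [norm_nonneg (L (G - γh)), norm_nonneg (L G - q),
        sq_nonneg (‖L γh - q‖)]
    have hchain : σ₁ * ‖G - γh‖ ≤ C * Real.sqrt S :=
      le_trans (hσ _) (le_trans hLle hnormb)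
    rw [show ϑ * hmax / (2 * σ₁) * Real.sqrt S = C * Real.sqrt S / σ₁ by
      rw [hC]; ring]
    rw [le_div_iff₀ hσpos]
    linarith [hchain]
end

section
/- Residual bound for the least-squares system: Under the hypotheses of the gradient estimation lemma with μ = 1, the vector q of difference quotients satisfies ‖A∇f(a) − q‖² ≤ (ϑ/2)² · h_max² · ∑_{k=1}^m ‖ν_k‖₁², where the k-th entry of A∇f(a) − q is ⟨ν_k, ∇f(a)⟩ − (f(a + h_k ν_k) − f(a))/h_k. -/
open scoped BigOperators RealInnerProductSpace

/-- Second-order Taylor bound from a Lipschitz gradient along a segment. -/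
lemma dnnr_taylor_bound {d : ℕ} (f : EuclideanSpace ℝ (Fin d) → ℝ)
    (B : Set (EuclideanSpace ℝ (Fin d))) (a u : EuclideanSpace ℝ (Fin d)) (ϑ : ℝ)
    (haint : a ∈ interior B) (hBconv : Convex ℝ B)
    (hsmooth : ContDiffOn ℝ 1 f B)
    (hlip : ∀ x ∈ B, ∀ y ∈ B, ‖gradient f x - gradient f y‖ ≤ ϑ * ‖x - y‖)
    (hmem : a + u ∈ B) :
    |f (a + u) - f a - ⟪gradient f a, u⟫| ≤ ϑ / 2 * ‖u‖ ^ 2 := by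
  set φ : ℝ → EuclideanSpace ℝ (Fin d) := fun t => a + t • u with hφ
  have hφint : ∀ t ∈ Set.Ico (0 : ℝ) 1, φ t ∈ interior B := by
    intro t ht
    have h1 : (1 - t) • a + t • (a + u) ∈ interior B :=
      hBconv.combo_interior_closure_mem_interior haint (subset_closure hmem)
        (by linarith [ht.2]) ht.1 (by ring)
    have h2 : (1 - t) • a + t • (a + u) = φ t := by
      simp only [hφ, smul_add, sub_smul, one_smul]; abel
    rwa [h2] at h1
  have hφmem : ∀ t ∈ Set.Icc (0 : ℝ) 1, φ t ∈ B := by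
    intro t ht
    have := hBconv.add_smul_mem (interior_subset haint) (by simpa [hφ] using hmem) ht
    simpa [hφ] using this
  have hdiff : ∀ t ∈ Set.Ico (0 : ℝ) 1, DifferentiableAt ℝ f (φ t) := by
    intro t ht
    exact (hsmooth.contDiffAt (mem_interior_iff_mem_nhds.mp (hφint t ht))).differentiableAt one_ne_zero
  set g : ℝ → ℝ := fun t => f (φ t) - f a - t * ⟪gradient f a, u⟫ with hg
  set g' : ℝ → ℝ := fun t => ⟪gradient f (φ t), u⟫ - ⟪gradient f a, u⟫ with hg'
  have hgderiv : ∀ t ∈ Set.Ico (0 : ℝ) 1, HasDerivAt g (g' t) t := by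
    intro t ht
    have h1 : HasDerivAt φ u t := by
      have h0 := ((hasDerivAt_id t).smul_const u).const_add a
      simp only [one_smul] at h0
      exact h0
    have h2 : HasGradientAt f (gradient f (φ t)) (φ t) := (hdiff t ht).hasGradientAt
    rw [hasGradientAt_iff_hasFDerivAt] at h2
    have h3 : HasDerivAt (fun s => f (φ s)) ⟪gradient f (φ t), u⟫ t := by
      have h4 := h2.comp_hasDerivAt t h1
      rw [InnerProductSpace.toDual_apply_apply] at h4
      exact h4
    exact (h3.sub_const (f a)).sub (hasDerivAt_mul_const ⟪gradient f a, u⟫)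
  have hgcont : ContinuousOn g (Set.Icc (0 : ℝ) 1) := by
    apply ContinuousOn.sub
    apply ContinuousOn.sub
    · exact hsmooth.continuousOn.comp
        (Continuous.continuousOn (by continuity)) hφmem
    · exact continuousOn_const
    · exact (continuous_id.mul continuous_const).continuousOn
  set C : ℝ := ϑ * ‖u‖ ^ 2 with hC
  have hBderiv : ∀ x : ℝ, HasDerivAt (fun t => C / 2 * t ^ 2) (C * x) x := by
    intro x
    have := (hasDerivAt_pow 2 x).const_mul (C / 2)
    exact this.congr_deriv (by simp only [Nat.cast_ofNat, Nat.reduceSub, pow_one]; ring)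
  have hbound : ∀ t ∈ Set.Ico (0 : ℝ) 1, ‖g' t‖ ≤ C * t := by
    intro t ht
    have hmemB : φ t ∈ B := interior_subset (hφint t ht)
    have h1 : g' t = ⟪gradient f (φ t) - gradient f a, u⟫ := by
      rw [inner_sub_left]
    have h2 : |⟪gradient f (φ t) - gradient f a, u⟫| ≤
        ‖gradient f (φ t) - gradient f a‖ * ‖u‖ := abs_real_inner_le_norm _ _
    have h3 : ‖gradient f (φ t) - gradient f a‖ ≤ ϑ * ‖φ t - a‖ :=
      hlip _ hmemB _ (interior_subset haint)
    have h4 : ‖φ t - a‖ = t * ‖u‖ := by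
      simp [hφ, norm_smul, abs_of_nonneg ht.1]
    rw [Real.norm_eq_abs, h1]
    calc |⟪gradient f (φ t) - gradient f a, u⟫|
        ≤ ‖gradient f (φ t) - gradient f a‖ * ‖u‖ := h2
      _ ≤ ϑ * (t * ‖u‖) * ‖u‖ := by
          rw [← h4]
          exact mul_le_mul_of_nonneg_right h3 (norm_nonneg u)
      _ = C * t := by rw [hC]; ring
  have key : ∀ x ∈ Set.Icc (0 : ℝ) 1, ‖g x‖ ≤ C / 2 * x ^ 2 := by
    apply image_norm_le_of_norm_deriv_right_le_deriv_boundary hgcont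
      (fun t ht => (hgderiv t ht).hasDerivWithinAt)
    · simp [hg, hφ]
    · exact hBderiv
    · exact hbound
  have h6 := key 1 (by norm_num)
  rw [Real.norm_eq_abs] at h6
  have h7 : g 1 = f (a + u) - f a - ⟪gradient f a, u⟫ := by simp [hg, hφ]
  rw [h7] at h6
  calc |f (a + u) - f a - ⟪gradient f a, u⟫| ≤ C / 2 * 1 ^ 2 := h6
    _ = ϑ / 2 * ‖u‖ ^ 2 := by rw [hC]; ring

/-- Residual bound for the least-squares system (μ = 1):
`∑_k (⟪ν_k, ∇f(a)⟫ - (f(a + h_k ν_k) - f a)/h_k)² ≤ (ϑ/2)² h_max² ∑_k ‖ν_k‖₁²`. -/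
theorem dnnr_least_squares_residual_bound
    (d m : ℕ) (f : EuclideanSpace ℝ (Fin d) → ℝ)
    (B : Set (EuclideanSpace ℝ (Fin d)))
    (a : EuclideanSpace ℝ (Fin d)) (ν : Fin m → EuclideanSpace ℝ (Fin d))
    (h : Fin m → ℝ) (ϑ hmax : ℝ)
    (hB : B ∈ nhds a) (hBconv : Convex ℝ B)
    (hsmooth : ContDiffOn ℝ 1 f B)
    (hϑ : 0 ≤ ϑ)
    (hlip : ∀ x ∈ B, ∀ y ∈ B, ‖gradient f x - gradient f y‖ ≤ ϑ * ‖x - y‖)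
    (hν : ∀ k, ‖ν k‖ = 1) (hh : ∀ k, 0 < h k)
    (hmem : ∀ k, a + h k • ν k ∈ B)
    (hmaxdef : hmax = ⨆ k, h k) :
    ∑ k, (⟪ν k, gradient f a⟫ - (f (a + h k • ν k) - f a) / h k) ^ 2
      ≤ (ϑ / 2) ^ 2 * hmax ^ 2 * ∑ k, (∑ i, |ν k i|) ^ 2 := by
  have haint : a ∈ interior B := mem_interior_iff_mem_nhds.mpr hB
  have hmaxge : ∀ k, h k ≤ hmax := by
    intro k
    rw [hmaxdef]
    exact le_ciSup (Set.finite_range h).bddAbove k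
  rw [Finset.mul_sum]
  apply Finset.sum_le_sum
  intro k _
  set L : ℝ := ∑ i, |ν k i| with hL
  have hLnn : 0 ≤ L := Finset.sum_nonneg fun i _ => abs_nonneg _
  have hL1 : (1 : ℝ) ≤ L := by
    have hsq : ∑ i, (ν k i) ^ 2 = 1 := by
      have h1 : ⟪ν k, ν k⟫ = (1 : ℝ) := by
        rw [real_inner_self_eq_norm_sq, hν k]; norm_num
      rw [← h1, PiLp.inner_apply]
      simp [sq, RCLike.inner_apply]
    have hle : ∑ i, (ν k i) ^ 2 ≤ L ^ 2 := by
      rw [sq, hL, Finset.sum_mul]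
      apply Finset.sum_le_sum
      intro i _
      calc (ν k i) ^ 2 = |ν k i| * |ν k i| := by rw [← abs_mul, ← sq, abs_sq]
        _ ≤ |ν k i| * ∑ j, |ν k j| := by
            apply mul_le_mul_of_nonneg_left _ (abs_nonneg _)
            exact Finset.single_le_sum (fun j _ => abs_nonneg (ν k j)) (Finset.mem_univ i)
    nlinarith
  set u : EuclideanSpace ℝ (Fin d) := h k • ν k with hu
  have hnu : ‖u‖ = h k := by
    rw [hu, norm_smul, hν k, Real.norm_eq_abs, abs_of_pos (hh k), mul_one]
  have htay : |f (a + u) - f a - ⟪gradient f a, u⟫| ≤ ϑ / 2 * ‖u‖ ^ 2 :=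
    dnnr_taylor_bound f B a u ϑ haint hBconv hsmooth hlip (hmem k)
  have hinner : ⟪gradient f a, u⟫ = h k * ⟪ν k, gradient f a⟫ := by
    rw [hu, real_inner_smul_right, real_inner_comm]
  have hterm : |⟪ν k, gradient f a⟫ - (f (a + u) - f a) / h k| ≤ ϑ / 2 * h k := by
    have hhk := hh k
    have heq : ⟪ν k, gradient f a⟫ - (f (a + u) - f a) / h k
        = -((f (a + u) - f a - ⟪gradient f a, u⟫) / h k) := by
      field_simp [hinner]
      rw [hinner]
      ring
    rw [heq, abs_neg, abs_div, abs_of_pos hhk, div_le_iff₀ hhk]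
    calc |f (a + u) - f a - ⟪gradient f a, u⟫| ≤ ϑ / 2 * ‖u‖ ^ 2 := htay
      _ = ϑ / 2 * h k * h k := by rw [hnu]; ring
  have hterm2 : |⟪ν k, gradient f a⟫ - (f (a + u) - f a) / h k| ≤ ϑ / 2 * hmax * L := by
    have h1 : ϑ / 2 * h k ≤ ϑ / 2 * hmax :=
      mul_le_mul_of_nonneg_left (hmaxge k) (by linarith)
    have h2 : ϑ / 2 * hmax = ϑ / 2 * hmax * 1 := by ring
    have h3 : (0:ℝ) ≤ ϑ / 2 * hmax :=
      mul_nonneg (by linarith) ((hh k).le.trans (hmaxge k))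
    calc |⟪ν k, gradient f a⟫ - (f (a + u) - f a) / h k| ≤ ϑ / 2 * h k := hterm
      _ ≤ ϑ / 2 * hmax := h1
      _ = ϑ / 2 * hmax * 1 := h2
      _ ≤ ϑ / 2 * hmax * L := mul_le_mul_of_nonneg_left hL1 h3
  calc (⟪ν k, gradient f a⟫ - (f (a + u) - f a) / h k) ^ 2
      = |⟪ν k, gradient f a⟫ - (f (a + u) - f a) / h k| ^ 2 := (sq_abs _).symm
    _ ≤ (ϑ / 2 * hmax * L) ^ 2 := pow_le_pow_left₀ (abs_nonneg _) hterm2 2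
    _ = (ϑ / 2) ^ 2 * hmax ^ 2 * L ^ 2 := by ring
end
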